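/- The Jaccard distance on finite subsets of a type is a metric: it is nonnegative, zero exactly on equal sets, symmetric, and satisfies the triangle inequality. -/

import Mathlib

/-- The Jaccard distance between finite sets: `1 - |A ∩ B| / |A ∪ B|`,
with the convention that it is `0` when both sets are empty. -/
noncomputable def jaccardDist {α : Type*} [DecidableEq α] (A B : Finset α) : ℝ :=
  if A ∪ B = ∅ then 0 else 1 - ((A ∩ B).card : ℝ) / ((A ∪ B).card : ℝ)

private lemma jaccard_real_key (a b c x y z : ℝ) (ha : 0 ≤ a) (hb : 0 ≤ b) (hc : 0 ≤ c)
    (hx : 0 < x) (hy : 0 < y) (hz : 0 < z)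
    (hax : a ≤ x) (hby : b ≤ y) (hcz : c ≤ z)
    (H1 : z + a + b ≤ c + x + y) (H2 : a + b ≤ c + y) (H3 : a + b ≤ c + x) :
    a / x + b / y ≤ 1 + c / z := by
  set f1 := x - a with hf1
  set f2 := y - b with hf2
  set f3 := z - c with hf3
  have hf1n : 0 ≤ f1 := by linarith
  have hf2n : 0 ≤ f2 := by linarith
  have hf3n : 0 ≤ f3 := by linarith
  set D := f1 + f2 + c with hD
  have hDx : x ≤ D := by simp only [hD, hf1, hf2]; linarith
  have hDy : y ≤ D := by simp only [hD, hf1, hf2]; linarith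
  have hDpos : 0 < D := lt_of_lt_of_le hx hDx
  have s1 : f1 / D ≤ f1 / x := div_le_div_of_nonneg_left hf1n hx hDx
  have s2 : f2 / D ≤ f2 / y := div_le_div_of_nonneg_left hf2n hy hDy
  have s3 : f3 / z ≤ (f1 + f2) / D := by
    rw [div_le_div_iff₀ hz hDpos]
    have h13 : f3 ≤ f1 + f2 := by simp only [hf1, hf2, hf3]; linarith
    have hzc : z = f3 + c := by ring
    nlinarith [mul_nonneg (sub_nonneg.2 h13) hc]
  have e1 : a / x = 1 - f1 / x := by field_simp; ring
  have e2 : b / y = 1 - f2 / y := by field_simp; ring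
  have e3 : c / z = 1 - f3 / z := by field_simp; ring
  have : (f1 + f2) / D = f1 / D + f2 / D := add_div f1 f2 D
  rw [e1, e2, e3]
  linarith

private lemma card_symmDiff_add_card_inter {α : Type*} [DecidableEq α] (s t : Finset α) :
    (symmDiff s t).card + (s ∩ t).card = (s ∪ t).card := by
  have h : symmDiff s t = (s ∪ t) \ (s ∩ t) := by
    ext x; simp [Finset.mem_symmDiff]; tauto
  rw [h, Finset.card_sdiff_add_card_eq_card]
  intro x hx
  exact Finset.mem_union_left _ (Finset.mem_of_mem_inter_left hx)

private lemma jaccard_H1 {α : Type*} [DecidableEq α] (A B C : Finset α) :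
    (A ∪ C).card + (A ∩ B).card + (B ∩ C).card ≤
      (A ∩ C).card + (A ∪ B).card + (B ∪ C).card := by
  have tri : (symmDiff A C).card ≤ (symmDiff A B).card + (symmDiff B C).card :=
    le_trans (Finset.card_le_card (symmDiff_triangle A B C)) (Finset.card_union_le _ _)
  have e1 := card_symmDiff_add_card_inter A B
  have e2 := card_symmDiff_add_card_inter B C
  have e3 := card_symmDiff_add_card_inter A C
  omega

private lemma jaccard_H2 {α : Type*} [DecidableEq α] (A B C : Finset α) :
    (A ∩ B).card + (B ∩ C).card ≤ (A ∩ C).card + (B ∪ C).card := by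
  have hsub : A ∩ B ⊆ (A ∩ C) ∪ symmDiff B C := by
    intro x hx
    simp only [Finset.mem_inter, Finset.mem_union, Finset.mem_symmDiff] at *
    tauto
  have h := le_trans (Finset.card_le_card hsub) (Finset.card_union_le _ _)
  have e := card_symmDiff_add_card_inter B C
  omega

private lemma jaccard_H3 {α : Type*} [DecidableEq α] (A B C : Finset α) :
    (A ∩ B).card + (B ∩ C).card ≤ (A ∩ C).card + (A ∪ B).card := by
  have hsub : B ∩ C ⊆ (A ∩ C) ∪ symmDiff A B := by
    intro x hx
    simp only [Finset.mem_inter, Finset.mem_union, Finset.mem_symmDiff] at *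
    tauto
  have h := le_trans (Finset.card_le_card hsub) (Finset.card_union_le _ _)
  have e := card_symmDiff_add_card_inter A B
  omega

theorem jaccardDist_is_metric {α : Type*} [DecidableEq α] :
    (∀ A B : Finset α, 0 ≤ jaccardDist A B) ∧
    (∀ A B : Finset α, jaccardDist A B = 0 ↔ A = B) ∧
    (∀ A B : Finset α, jaccardDist A B = jaccardDist B A) ∧
    (∀ A B C : Finset α, jaccardDist A C ≤ jaccardDist A B + jaccardDist B C) := by
  have nonneg : ∀ A B : Finset α, 0 ≤ jaccardDist A B := by
    intro A B
    unfold jaccardDist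
    split
    · exact le_refl 0
    · rename_i h
      have hpos : (0 : ℝ) < (A ∪ B).card := by
        exact_mod_cast Finset.card_pos.2 (Finset.nonempty_iff_ne_empty.2 h)
      have : ((A ∩ B).card : ℝ) / ((A ∪ B).card : ℝ) ≤ 1 := by
        rw [div_le_one hpos]
        exact_mod_cast Finset.card_le_card (Finset.inter_subset_union)
      linarith
  refine ⟨nonneg, ?_, ?_, ?_⟩
  · intro A B
    unfold jaccardDist
    split
    · rename_i h
      rw [Finset.union_eq_empty] at h
      simp [h.1, h.2]
    · rename_i h
      have hpos : (0 : ℝ) < (A ∪ B).card := by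
        exact_mod_cast Finset.card_pos.2 (Finset.nonempty_iff_ne_empty.2 h)
      constructor
      · intro heq
        have : ((A ∩ B).card : ℝ) = ((A ∪ B).card : ℝ) := by
          field_simp at heq
          linarith
        have hcard : (A ∩ B).card = (A ∪ B).card := by exact_mod_cast this
        have hsub : A ∪ B ⊆ A ∩ B :=
          Finset.eq_of_subset_of_card_le Finset.inter_subset_union hcard.ge ▸ le_refl _
        have hAB : A ∪ B = A ∩ B :=
          (Finset.eq_of_subset_of_card_le Finset.inter_subset_union hcard.ge).symm
        apply Finset.Subset.antisymm
        · intro x hx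
          exact Finset.mem_of_mem_inter_right (hAB ▸ Finset.mem_union_left _ hx)
        · intro x hx
          exact Finset.mem_of_mem_inter_left (hAB ▸ Finset.mem_union_right _ hx)
      · intro heq
        subst heq
        simp [Finset.union_self, Finset.inter_self] at *
        field_simp
        norm_num
  · intro A B
    unfold jaccardDist
    rw [Finset.union_comm, Finset.inter_comm]
  · intro A B C
    by_cases hAB : A ∪ B = ∅
    · rw [Finset.union_eq_empty] at hAB
      rw [hAB.1, hAB.2]
      have h0 : jaccardDist (∅ : Finset α) ∅ = 0 := by simp [jaccardDist]
      rw [h0, zero_add]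
    · by_cases hBC : B ∪ C = ∅
      · rw [Finset.union_eq_empty] at hBC
        rw [hBC.1, hBC.2]
        have h0 : jaccardDist (∅ : Finset α) ∅ = 0 := by simp [jaccardDist]
        rw [h0, add_zero]
      · by_cases hAC : A ∪ C = ∅
        · have : jaccardDist A C = 0 := by simp [jaccardDist, hAC]
          rw [this]
          exact add_nonneg (nonneg A B) (nonneg B C)
        · have hx : (0 : ℝ) < (A ∪ B).card := by
            exact_mod_cast Finset.card_pos.2 (Finset.nonempty_iff_ne_empty.2 hAB)
          have hy : (0 : ℝ) < (B ∪ C).card := by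
            exact_mod_cast Finset.card_pos.2 (Finset.nonempty_iff_ne_empty.2 hBC)
          have hz : (0 : ℝ) < (A ∪ C).card := by
            exact_mod_cast Finset.card_pos.2 (Finset.nonempty_iff_ne_empty.2 hAC)
          have hax : ((A ∩ B).card : ℝ) ≤ (A ∪ B).card := by
            exact_mod_cast Finset.card_le_card (Finset.inter_subset_union)
          have hby : ((B ∩ C).card : ℝ) ≤ (B ∪ C).card := by
            exact_mod_cast Finset.card_le_card (Finset.inter_subset_union)
          have hcz : ((A ∩ C).card : ℝ) ≤ (A ∪ C).card := by
            exact_mod_cast Finset.card_le_card (Finset.inter_subset_union)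
          have H1 : ((A ∪ C).card : ℝ) + (A ∩ B).card + (B ∩ C).card ≤
              ((A ∩ C).card : ℝ) + (A ∪ B).card + (B ∪ C).card := by
            exact_mod_cast jaccard_H1 A B C
          have H2 : ((A ∩ B).card : ℝ) + (B ∩ C).card ≤
              ((A ∩ C).card : ℝ) + (B ∪ C).card := by
            exact_mod_cast jaccard_H2 A B C
          have H3 : ((A ∩ B).card : ℝ) + (B ∩ C).card ≤
              ((A ∩ C).card : ℝ) + (A ∪ B).card := by
            exact_mod_cast jaccard_H3 A B C
          have key := jaccard_real_key ((A ∩ B).card : ℝ) ((B ∩ C).card : ℝ)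
            ((A ∩ C).card : ℝ) ((A ∪ B).card : ℝ) ((B ∪ C).card : ℝ) ((A ∪ C).card : ℝ)
            (by positivity) (by positivity) (by positivity) hx hy hz hax hby hcz H1 H2 H3
          unfold jaccardDist
          rw [if_neg hAC, if_neg hAB, if_neg hBC]
          linarith
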